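/- Let μ ∈ ℝ with μ ≠ 0 and let λ = (μ²−1)/μ. The general solution of the system f_xx = iλ f_x − f, f_xy = iμ f_y, f_yy = iμ f_x − f for a smooth function f : ℝ² → ℂ has the form f(x,y) = (c₂ sin(√(μ²+1) y) + c₃ cos(√(μ²+1) y)) e^{iμx} + c₁ · i μ/(μ²+1) · e^{i(λ−μ)x} for constants c₁, c₂, c₃ ∈ ℂ; that is, any f of this form satisfies the system. -/

import Mathlib

lemma hexp' (a : ℂ) (t : ℝ) :
    HasDerivAt (fun t : ℝ => Complex.exp (a * t)) (a * Complex.exp (a * t)) t := by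
  have h := (((hasDerivAt_id ((t : ℝ) : ℂ)).const_mul a).cexp).comp_ofReal
  simpa [mul_comm] using h

lemma hsin' (a : ℂ) (t : ℝ) :
    HasDerivAt (fun t : ℝ => Complex.sin (a * t)) (a * Complex.cos (a * t)) t := by
  have h := (((hasDerivAt_id ((t : ℝ) : ℂ)).const_mul a).csin).comp_ofReal
  simpa [mul_comm] using h

lemma hcos' (a : ℂ) (t : ℝ) :
    HasDerivAt (fun t : ℝ => Complex.cos (a * t)) (-(a * Complex.sin (a * t))) t := by
  have h := (((hasDerivAt_id ((t : ℝ) : ℂ)).const_mul a).ccos).comp_ofReal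
  simpa [mul_comm] using h

theorem stmt_9 (μ : ℝ) (hμ : μ ≠ 0) (lam : ℝ) (hlam : lam = (μ ^ 2 - 1) / μ)
    (c₁ c₂ c₃ : ℂ) (f : ℝ → ℝ → ℂ)
    (hf : ∀ x y, f x y =
      (c₂ * (Real.sin (Real.sqrt (μ ^ 2 + 1) * y) : ℝ) +
        c₃ * (Real.cos (Real.sqrt (μ ^ 2 + 1) * y) : ℝ)) * Complex.exp (Complex.I * μ * x) +
      c₁ * (Complex.I * μ / ((μ : ℂ) ^ 2 + 1)) * Complex.exp (Complex.I * (lam - μ) * x)) :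
    ∀ x y : ℝ,
      deriv (fun x' => deriv (fun x'' => f x'' y) x') x =
        Complex.I * (lam : ℂ) * deriv (fun x'' => f x'' y) x - f x y ∧
      deriv (fun x' => deriv (fun y' => f x' y') y) x =
        Complex.I * (μ : ℂ) * deriv (fun y' => f x y') y ∧
      deriv (fun y' => deriv (fun y'' => f x y'') y') y =
        Complex.I * (μ : ℂ) * deriv (fun x'' => f x'' y) x - f x y := by
  have hμc : (μ : ℂ) ≠ 0 := Complex.ofReal_ne_zero.mpr hμ
  have hden : ((μ : ℂ) ^ 2 + 1) ≠ 0 := by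
    have h0 : ((μ ^ 2 + 1 : ℝ) : ℂ) ≠ 0 := Complex.ofReal_ne_zero.mpr (by positivity)
    push_cast at h0; exact h0
  have hlamc : (lam : ℂ) = ((μ : ℂ) ^ 2 - 1) / μ := by rw [hlam]; push_cast; ring
  set s : ℝ := Real.sqrt (μ ^ 2 + 1) with hsdef
  have hs2 : (s : ℂ) ^ 2 = (μ : ℂ) ^ 2 + 1 := by
    have h1 : s ^ 2 = μ ^ 2 + 1 := Real.sq_sqrt (by positivity)
    calc (s : ℂ) ^ 2 = ((s ^ 2 : ℝ) : ℂ) := by push_cast; ring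
      _ = _ := by rw [h1]; push_cast; ring
  set ν : ℂ := Complex.I * ((lam : ℂ) - μ) with hν
  set B : ℂ := c₁ * (Complex.I * μ / ((μ : ℂ) ^ 2 + 1)) with hB
  -- rewrite f
  have hfeq : ∀ x y : ℝ, f x y =
      (c₂ * Complex.sin ((s : ℂ) * y) + c₃ * Complex.cos ((s : ℂ) * y)) *
        Complex.exp ((Complex.I * μ) * x) + B * Complex.exp (ν * x) := by
    intro x y
    rw [hf]
    push_cast [Complex.ofReal_sin, Complex.ofReal_cos]
    ring_nf
  -- x-derivative
  have dfx : ∀ x y : ℝ, HasDerivAt (fun x' => f x' y)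
      ((c₂ * Complex.sin ((s : ℂ) * y) + c₃ * Complex.cos ((s : ℂ) * y)) *
        ((Complex.I * μ) * Complex.exp ((Complex.I * μ) * x)) +
       B * (ν * Complex.exp (ν * x))) x := by
    intro x y
    have h := ((hexp' (Complex.I * μ) x).const_mul
        (c₂ * Complex.sin ((s : ℂ) * y) + c₃ * Complex.cos ((s : ℂ) * y))).add
      ((hexp' ν x).const_mul B)
    have hfun : (fun x' => f x' y) = fun x' : ℝ =>
        (c₂ * Complex.sin ((s : ℂ) * y) + c₃ * Complex.cos ((s : ℂ) * y)) *
          Complex.exp ((Complex.I * μ) * x') + B * Complex.exp (ν * x') :=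
      funext fun x' => hfeq x' y
    rw [hfun]; exact h
  -- y-derivative
  have dfy : ∀ x y : ℝ, HasDerivAt (fun y' => f x y')
      ((c₂ * ((s : ℂ) * Complex.cos ((s : ℂ) * y)) +
        c₃ * (-((s : ℂ) * Complex.sin ((s : ℂ) * y)))) *
        Complex.exp ((Complex.I * μ) * x)) y := by
    intro x y
    have h := ((((hsin' (s : ℂ) y).const_mul c₂).add
        ((hcos' (s : ℂ) y).const_mul c₃)).mul_const
        (Complex.exp ((Complex.I * μ) * x))).add_const (B * Complex.exp (ν * x))
    have hfun : (fun y' => f x y') = fun y' : ℝ =>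
        (c₂ * Complex.sin ((s : ℂ) * y') + c₃ * Complex.cos ((s : ℂ) * y')) *
          Complex.exp ((Complex.I * μ) * x) + B * Complex.exp (ν * x) :=
      funext fun y' => hfeq x y'
    rw [hfun]; exact h
  intro x y
  have hdx : deriv (fun x'' => f x'' y) x =
      (c₂ * Complex.sin ((s : ℂ) * y) + c₃ * Complex.cos ((s : ℂ) * y)) *
        ((Complex.I * μ) * Complex.exp ((Complex.I * μ) * x)) +
       B * (ν * Complex.exp (ν * x)) := (dfx x y).deriv
  have hdy : deriv (fun y' => f x y') y =
      (c₂ * ((s : ℂ) * Complex.cos ((s : ℂ) * y)) +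
        c₃ * (-((s : ℂ) * Complex.sin ((s : ℂ) * y)))) *
        Complex.exp ((Complex.I * μ) * x) := (dfy x y).deriv
  refine ⟨?_, ?_, ?_⟩
  · -- f_xx
    have hfun : (fun x' => deriv (fun x'' => f x'' y) x') = fun x' : ℝ =>
        (c₂ * Complex.sin ((s : ℂ) * y) + c₃ * Complex.cos ((s : ℂ) * y)) *
          ((Complex.I * μ) * Complex.exp ((Complex.I * μ) * x')) +
         B * (ν * Complex.exp (ν * x')) := funext fun x' => (dfx x' y).deriv
    rw [hfun]
    have h2 : HasDerivAt (fun x' : ℝ =>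
        (c₂ * Complex.sin ((s : ℂ) * y) + c₃ * Complex.cos ((s : ℂ) * y)) *
          ((Complex.I * μ) * Complex.exp ((Complex.I * μ) * x')) +
         B * (ν * Complex.exp (ν * x')))
        ((c₂ * Complex.sin ((s : ℂ) * y) + c₃ * Complex.cos ((s : ℂ) * y)) *
          ((Complex.I * μ) * ((Complex.I * μ) * Complex.exp ((Complex.I * μ) * x))) +
         B * (ν * (ν * Complex.exp (ν * x)))) x :=
      (((hexp' (Complex.I * μ) x).const_mul (Complex.I * μ)).const_mul _).add
        (((hexp' ν x).const_mul ν).const_mul B)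
    rw [h2.deriv, hdx, hfeq x y]
    rw [hν, hlamc]
    field_simp
    ring_nf
    simp only [show (Complex.I)^3 = -Complex.I from by
      rw [pow_succ, Complex.I_sq]; ring, Complex.I_sq]
    ring
  · -- f_xy
    have hfun : (fun x' => deriv (fun y' => f x' y') y) = fun x' : ℝ =>
        (c₂ * ((s : ℂ) * Complex.cos ((s : ℂ) * y)) +
          c₃ * (-((s : ℂ) * Complex.sin ((s : ℂ) * y)))) *
          Complex.exp ((Complex.I * μ) * x') := funext fun x' => (dfy x' y).deriv
    rw [hfun]
    have h2 : HasDerivAt (fun x' : ℝ =>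
        (c₂ * ((s : ℂ) * Complex.cos ((s : ℂ) * y)) +
          c₃ * (-((s : ℂ) * Complex.sin ((s : ℂ) * y)))) *
          Complex.exp ((Complex.I * μ) * x'))
        ((c₂ * ((s : ℂ) * Complex.cos ((s : ℂ) * y)) +
          c₃ * (-((s : ℂ) * Complex.sin ((s : ℂ) * y)))) *
          ((Complex.I * μ) * Complex.exp ((Complex.I * μ) * x))) x :=
      (hexp' (Complex.I * μ) x).const_mul _
    rw [h2.deriv, hdy]
    ring
  · -- f_yy
    have hfun : (fun y'' => deriv (fun y' => f x y') y'') = fun y'' : ℝ =>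
        (c₂ * ((s : ℂ) * Complex.cos ((s : ℂ) * y'')) +
          c₃ * (-((s : ℂ) * Complex.sin ((s : ℂ) * y'')))) *
          Complex.exp ((Complex.I * μ) * x) := funext fun y'' => (dfy x y'').deriv
    rw [show (fun y' => deriv (fun y'' => f x y'') y') = (fun y'' : ℝ =>
        (c₂ * ((s : ℂ) * Complex.cos ((s : ℂ) * y'')) +
          c₃ * (-((s : ℂ) * Complex.sin ((s : ℂ) * y'')))) *
          Complex.exp ((Complex.I * μ) * x)) from hfun]
    have h2 : HasDerivAt (fun y'' : ℝ =>
        (c₂ * ((s : ℂ) * Complex.cos ((s : ℂ) * y'')) +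
          c₃ * (-((s : ℂ) * Complex.sin ((s : ℂ) * y'')))) *
          Complex.exp ((Complex.I * μ) * x))
        ((c₂ * ((s : ℂ) * -((s : ℂ) * Complex.sin ((s : ℂ) * y))) +
          c₃ * (-((s : ℂ) * ((s : ℂ) * Complex.cos ((s : ℂ) * y))))) *
          Complex.exp ((Complex.I * μ) * x)) y := by
      refine HasDerivAt.mul_const ?_ _
      have h3 := ((hcos' (s : ℂ) y).const_mul ((s : ℂ))).const_mul c₂
      have h4 := (((hsin' (s : ℂ) y).const_mul ((s : ℂ))).const_mul c₃).neg
      simpa [mul_comm, mul_assoc, mul_left_comm, Pi.add_def, Pi.neg_def] using h3.add h4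
    rw [h2.deriv, hdx, hfeq x y]
    rw [hν, hlamc]
    have hs2' : (s : ℂ) * (s : ℂ) = (μ : ℂ) ^ 2 + 1 := by rw [← hs2]; ring
    field_simp
    ring_nf
    simp only [show (Complex.I)^3 = -Complex.I from by
      rw [pow_succ, Complex.I_sq]; ring, Complex.I_sq]
    ring_nf
    rw [hs2]
    ring
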